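/- Soundness of AUnif: let D be a derivation ⟨A0;S0;T0;θ0⟩ ⟹* ⟨∅;S_n;T_n;θ_n⟩ by AUnif rules ending in a final configuration, and let σ_D = σ_{S_n ∪ T_n} and ρ_D = ρ_{S_n ∪ T_n}. Then for every AUE s ≜_x t ∈ A0 ∪ S0 ∪ T0, the term xθ_n is an Abs-generalization of s and t; more precisely, xθ_n σ_D ≈_Abs s and xθ_n ρ_D ≈_Abs t. -/

import Mathlib

/- Common development: first-order terms, absorption theories, anti-unification
   equations, configurations and the AUnif transformation rules. -/

namespace AbsAU

/-- First-order terms over a set `F` of function symbols, with variables drawn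
from the countably infinite set `ℕ`. -/
inductive Tm (F : Type) : Type where
  | var : ℕ → Tm F
  | app : F → List (Tm F) → Tm F

namespace Tm

variable {F : Type}

/-- Application of a substitution (given as a total map on variables) to a term. -/
def subst (σ : ℕ → Tm F) : Tm F → Tm F
  | var x => σ x
  | app f ts => app f (ts.attach.map fun t => subst σ t.1)
decreasing_by
  have := List.sizeOf_lt_of_mem t.2
  simp only [Tm.app.sizeOf_spec]
  omega

/-- The head of a term: a variable or a function symbol. -/
def head : Tm F → ℕ ⊕ F
  | var x => Sum.inl x
  | app f _ => Sum.inr f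

end Tm

/-- `VarIn x t` holds iff the variable `x` occurs in the term `t`. -/
inductive VarIn {F : Type} : ℕ → Tm F → Prop where
  | var (x : ℕ) : VarIn x (.var x)
  | app {x : ℕ} {t : Tm F} (f : F) {ts : List (Tm F)} :
      t ∈ ts → VarIn x t → VarIn x (.app f ts)

/-- `SymOcc f t` holds iff the function symbol `f` occurs in the term `t`. -/
inductive SymOcc {F : Type} (f : F) : Tm F → Prop where
  | head (ts : List (Tm F)) : SymOcc f (.app f ts)
  | arg {t : Tm F} (g : F) {ts : List (Tm F)} :
      t ∈ ts → SymOcc f t → SymOcc f (.app g ts)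

/-- Signature data: an arity for every symbol and the distinguished wild card
constant `⋆`. -/
structure AbsSig (F : Type) where
  arity : F → ℕ
  star : F
  star_arity : arity star = 0

/-- Arity-respecting (well-formed) terms. -/
inductive WFT {F : Type} (Sg : AbsSig F) : Tm F → Prop where
  | var (x : ℕ) : WFT Sg (.var x)
  | app {f : F} {ts : List (Tm F)} :
      ts.length = Sg.arity f → (∀ t ∈ ts, WFT Sg t) → WFT Sg (.app f ts)

/-- An absorption theory: finitely many pairs `(f, ε_f)` of a binary symbol
together with its absorption constant, all chosen symbols pairwise distinct and
distinct from the wild card. -/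
structure AbsTh {F : Type} (Sg : AbsSig F) where
  pairs : Set (F × F)
  finite : pairs.Finite
  binary : ∀ p ∈ pairs, Sg.arity p.1 = 2
  constZ : ∀ p ∈ pairs, Sg.arity p.2 = 0
  distinct : ∀ p ∈ pairs, ∀ q ∈ pairs, p ≠ q →
      p.1 ≠ q.1 ∧ p.1 ≠ q.2 ∧ p.2 ≠ q.1 ∧ p.2 ≠ q.2
  ne : ∀ p ∈ pairs, p.1 ≠ p.2
  star_ne : ∀ p ∈ pairs, Sg.star ≠ p.1 ∧ Sg.star ≠ p.2

variable {F : Type}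

/-- `≈_Abs` : the least congruence on terms containing all substitution
instances of the absorption axioms `f(ε_f, x) ≈ ε_f` and `f(x, ε_f) ≈ ε_f`. -/
inductive AbsEq {Sg : AbsSig F} (Th : AbsTh Sg) : Tm F → Tm F → Prop where
  | absL {f e : F} (t : Tm F) : (f, e) ∈ Th.pairs →
      AbsEq Th (.app f [.app e [], t]) (.app e [])
  | absR {f e : F} (t : Tm F) : (f, e) ∈ Th.pairs →
      AbsEq Th (.app f [t, .app e []]) (.app e [])
  | refl (t : Tm F) : AbsEq Th t t
  | symm {s t : Tm F} : AbsEq Th s t → AbsEq Th t s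
  | trans {s t u : Tm F} : AbsEq Th s t → AbsEq Th t u → AbsEq Th s u
  | congr (f : F) {ss ts : List (Tm F)} :
      List.Forall₂ (AbsEq Th) ss ts → AbsEq Th (.app f ss) (.app f ts)

/-- The domain of a substitution. -/
def Dom (σ : ℕ → Tm F) : Set ℕ := {x | σ x ≠ .var x}

/-- A substitution proper has a finite domain. -/
def FinDom (σ : ℕ → Tm F) : Prop := (Dom σ).Finite

/-- The variables occurring in the range of a substitution. -/
def Rvar (σ : ℕ → Tm F) : Set ℕ := {y | ∃ x ∈ Dom σ, VarIn y (σ x)}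

/-- `r ≲_Abs s` : `r` is more general than `s` modulo the absorption theory. -/
def MoreGen {Sg : AbsSig F} (Th : AbsTh Sg) (r s : Tm F) : Prop :=
  ∃ σ : ℕ → Tm F, FinDom σ ∧ AbsEq Th (r.subst σ) s

/-- `r` is an `Abs`-generalization of `s` and `t`. -/
def Gen {Sg : AbsSig F} (Th : AbsTh Sg) (r s t : Tm F) : Prop :=
  MoreGen Th r s ∧ MoreGen Th r t

/-- The set of all `Abs`-generalizations of `s` and `t`. -/
def GAbs {Sg : AbsSig F} (Th : AbsTh Sg) (s t : Tm F) : Set (Tm F) :=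
  {r | Gen Th r s t}

/-- `M` is a minimal complete set of `Abs`-generalizations of `s` and `t`. -/
def IsMCSG {Sg : AbsSig F} (Th : AbsTh Sg) (M : Set (Tm F)) (s t : Tm F) : Prop :=
  M ⊆ GAbs Th s t ∧
  (∀ r ∈ GAbs Th s t, ∃ r' ∈ M, MoreGen Th r r') ∧
  (∀ r ∈ M, ∀ r' ∈ M, MoreGen Th r r' → r = r')

/-- `Abs`-normal forms: no absorption constant occurs as an argument of its
absorption symbol. -/
inductive NF {Sg : AbsSig F} (Th : AbsTh Sg) : Tm F → Prop where
  | var (x : ℕ) : NF Th (.var x)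
  | app {f : F} {ts : List (Tm F)} :
      (∀ t ∈ ts, NF Th t) →
      (∀ e : F, (f, e) ∈ Th.pairs → Tm.app e [] ∉ ts) →
      NF Th (.app f ts)

/-- An anti-unification equation (AUE) `lhs ≜_lab rhs`. -/
structure AUE (F : Type) where
  lhs : Tm F
  lab : ℕ
  rhs : Tm F

/-- The labels of a set of AUEs. -/
def labels (W : Set (AUE F)) : Set ℕ := AUE.lab '' W

/-- A set of AUEs is valid if its labels are pairwise distinct. -/
def ValidAUEs (W : Set (AUE F)) : Prop :=
  ∀ a ∈ W, ∀ b ∈ W, a.lab = b.lab → a = b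

/-- The wild card, as a term. -/
def starTm (Sg : AbsSig F) : Tm F := .app Sg.star []

/-- A wild AUE has the wild card on one of its sides. -/
def WildAUE (Sg : AbsSig F) (a : AUE F) : Prop :=
  a.lhs = starTm Sg ∨ a.rhs = starTm Sg

/-- The heads of `s` and `t` form a related absorption pair. -/
def RelatedAbs {Sg : AbsSig F} (Th : AbsTh Sg) (s t : Tm F) : Prop :=
  ∃ f e : F, (f, e) ∈ Th.pairs ∧
    ((s.head = Sum.inr f ∧ t.head = Sum.inr e) ∨
     (s.head = Sum.inr e ∧ t.head = Sum.inr f))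

/-- A solved AUE: distinct heads, no related absorption symbols, not wild. -/
def SolvedAUE {Sg : AbsSig F} (Th : AbsTh Sg) (a : AUE F) : Prop :=
  a.lhs.head ≠ a.rhs.head ∧ ¬ RelatedAbs Th a.lhs a.rhs ∧ ¬ WildAUE Sg a

/-- A proper object term appearing in an AUE of a configuration: in
`Abs`-normal form, arity-respecting, ground, and wild-card free. -/
def GoodTm {Sg : AbsSig F} (Th : AbsTh Sg) (t : Tm F) : Prop :=
  NF Th t ∧ WFT Sg t ∧ (∀ x : ℕ, ¬ VarIn x t) ∧ ¬ SymOcc Sg.star t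

/-- A configuration `⟨A; S; T; θ⟩`. -/
structure Config (F : Type) where
  A : Set (AUE F)
  S : Set (AUE F)
  T : Set (AUE F)
  θ : ℕ → Tm F

/-- The defining properties of configurations: `A`, `S`, `T` are (finite) valid
sets of unsolved, solved, resp. wild AUEs over object terms in `Abs`-normal
form, `θ` is a substitution, (i) the labels of `A`, `S`, `T` and the domain of
`θ` are pairwise disjoint, and (ii) the variables occurring in the range of `θ`
are exactly the labels of `A`, `S` and `T`. -/
structure IsConfig {Sg : AbsSig F} (Th : AbsTh Sg) (C : Config F) : Prop where
  finA : C.A.Finite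
  finS : C.S.Finite
  finT : C.T.Finite
  validA : ValidAUEs C.A
  validS : ValidAUEs C.S
  validT : ValidAUEs C.T
  goodA : ∀ a ∈ C.A, GoodTm Th a.lhs ∧ GoodTm Th a.rhs
  goodS : ∀ a ∈ C.S, GoodTm Th a.lhs ∧ GoodTm Th a.rhs
  solvedS : ∀ a ∈ C.S, SolvedAUE Th a
  wildT : ∀ a ∈ C.T,
      (a.lhs = starTm Sg ∧ GoodTm Th a.rhs) ∨
      (a.rhs = starTm Sg ∧ GoodTm Th a.lhs)
  finDom : FinDom C.θ
  nfθ : ∀ x : ℕ, NF Th (C.θ x) ∧ WFT Sg (C.θ x)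
  disjAS : Disjoint (labels C.A) (labels C.S)
  disjAT : Disjoint (labels C.A) (labels C.T)
  disjST : Disjoint (labels C.S) (labels C.T)
  disjAD : Disjoint (labels C.A) (Dom C.θ)
  disjSD : Disjoint (labels C.S) (Dom C.θ)
  disjTD : Disjoint (labels C.T) (Dom C.θ)
  rvarEq : Rvar C.θ = labels C.A ∪ labels C.S ∪ labels C.T

/-- The substitution `{x ↦ t}`. -/
def single (x : ℕ) (t : Tm F) : ℕ → Tm F :=
  fun z => if z = x then t else .var z

/-- Composition `θ{x ↦ t}` of a substitution with a single binding. -/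
def compOne (θ : ℕ → Tm F) (x : ℕ) (t : Tm F) : ℕ → Tm F :=
  fun z => (θ z).subst (single x t)

/-- A variable is fresh for a configuration. -/
def FreshIn (C : Config F) (y : ℕ) : Prop :=
  y ∉ labels C.A ∧ y ∉ labels C.S ∧ y ∉ labels C.T ∧
  y ∉ Dom C.θ ∧ y ∉ Rvar C.θ

/-- Canonical choice of the next fresh variable for a configuration. -/
noncomputable def nextFresh (C : Config F) : ℕ :=
  sInf {k : ℕ | ∀ m : ℕ, k ≤ m → FreshIn C m}

/-- The set of AUEs `{s₁ ≜_{y₁} t₁, …, sₙ ≜_{yₙ} tₙ}`. -/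
def zipAUEs (ss : List (Tm F)) (ys : List ℕ) (ts : List (Tm F)) : Set (AUE F) :=
  {a | ∃ (i : ℕ) (h1 : i < ss.length) (h2 : i < ys.length) (h3 : i < ts.length),
      a = ⟨ss.get ⟨i, h1⟩, ys.get ⟨i, h2⟩, ts.get ⟨i, h3⟩⟩}

/-- The AUnif transformation rules: Decompose, Solve, the four Expansion rules
for left/right absorption, and Merge. -/
inductive Step {Sg : AbsSig F} (Th : AbsTh Sg) : Config F → Config F → Prop where
  | dec (f : F) (ss ts : List (Tm F)) (x : ℕ) (ys : List ℕ)
      (A S T : Set (AUE F)) (θ : ℕ → Tm F)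
      (hlen : ss.length = ts.length)
      (hnotin : (⟨.app f ss, x, .app f ts⟩ : AUE F) ∉ A)
      (hys : ys = (List.range ss.length).map
          (fun i => nextFresh (⟨insert ⟨.app f ss, x, .app f ts⟩ A, S, T, θ⟩ : Config F) + i)) :
      Step Th ⟨insert ⟨.app f ss, x, .app f ts⟩ A, S, T, θ⟩
        ⟨zipAUEs ss ys ts ∪ A, S, T, compOne θ x (.app f (ys.map Tm.var))⟩
  | sol (a : AUE F) (A S T : Set (AUE F)) (θ : ℕ → Tm F)
      (hhead : a.lhs.head ≠ a.rhs.head)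
      (hrel : ¬ RelatedAbs Th a.lhs a.rhs)
      (hnotin : a ∉ A) :
      Step Th ⟨insert a A, S, T, θ⟩ ⟨A, insert a S, T, θ⟩
  | expLA1 (f e : F) (t1 t2 : Tm F) (x y1 y2 : ℕ)
      (A S T : Set (AUE F)) (θ : ℕ → Tm F)
      (hp : (f, e) ∈ Th.pairs)
      (hnotin : (⟨.app e [], x, .app f [t1, t2]⟩ : AUE F) ∉ A)
      (hy1 : y1 = nextFresh (⟨insert ⟨.app e [], x, .app f [t1, t2]⟩ A, S, T, θ⟩ : Config F))
      (hy2 : y2 = y1 + 1) :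
      Step Th ⟨insert ⟨.app e [], x, .app f [t1, t2]⟩ A, S, T, θ⟩
        ⟨insert ⟨.app e [], y1, t1⟩ A, S, insert ⟨starTm Sg, y2, t2⟩ T,
          compOne θ x (.app f [.var y1, .var y2])⟩
  | expLA2 (f e : F) (t1 t2 : Tm F) (x y1 y2 : ℕ)
      (A S T : Set (AUE F)) (θ : ℕ → Tm F)
      (hp : (f, e) ∈ Th.pairs)
      (hnotin : (⟨.app e [], x, .app f [t1, t2]⟩ : AUE F) ∉ A)
      (hy1 : y1 = nextFresh (⟨insert ⟨.app e [], x, .app f [t1, t2]⟩ A, S, T, θ⟩ : Config F))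
      (hy2 : y2 = y1 + 1) :
      Step Th ⟨insert ⟨.app e [], x, .app f [t1, t2]⟩ A, S, T, θ⟩
        ⟨insert ⟨.app e [], y2, t2⟩ A, S, insert ⟨starTm Sg, y1, t1⟩ T,
          compOne θ x (.app f [.var y1, .var y2])⟩
  | expRA1 (f e : F) (s1 s2 : Tm F) (x y1 y2 : ℕ)
      (A S T : Set (AUE F)) (θ : ℕ → Tm F)
      (hp : (f, e) ∈ Th.pairs)
      (hnotin : (⟨.app f [s1, s2], x, .app e []⟩ : AUE F) ∉ A)
      (hy1 : y1 = nextFresh (⟨insert ⟨.app f [s1, s2], x, .app e []⟩ A, S, T, θ⟩ : Config F))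
      (hy2 : y2 = y1 + 1) :
      Step Th ⟨insert ⟨.app f [s1, s2], x, .app e []⟩ A, S, T, θ⟩
        ⟨insert ⟨s1, y1, .app e []⟩ A, S, insert ⟨s2, y2, starTm Sg⟩ T,
          compOne θ x (.app f [.var y1, .var y2])⟩
  | expRA2 (f e : F) (s1 s2 : Tm F) (x y1 y2 : ℕ)
      (A S T : Set (AUE F)) (θ : ℕ → Tm F)
      (hp : (f, e) ∈ Th.pairs)
      (hnotin : (⟨.app f [s1, s2], x, .app e []⟩ : AUE F) ∉ A)
      (hy1 : y1 = nextFresh (⟨insert ⟨.app f [s1, s2], x, .app e []⟩ A, S, T, θ⟩ : Config F))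
      (hy2 : y2 = y1 + 1) :
      Step Th ⟨insert ⟨.app f [s1, s2], x, .app e []⟩ A, S, T, θ⟩
        ⟨insert ⟨s2, y2, .app e []⟩ A, S, insert ⟨s1, y1, starTm Sg⟩ T,
          compOne θ x (.app f [.var y1, .var y2])⟩
  | mer (s t : Tm F) (x y : ℕ) (S T : Set (AUE F)) (θ : ℕ → Tm F)
      (hxy : x ≠ y)
      (hx : (⟨s, x, t⟩ : AUE F) ∉ S) (hy : (⟨s, y, t⟩ : AUE F) ∉ S) :
      Step Th ⟨∅, insert ⟨s, x, t⟩ (insert ⟨s, y, t⟩ S), T, θ⟩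
        ⟨∅, insert ⟨s, y, t⟩ S, T, compOne θ x (.var y)⟩

/-- A final (normal) configuration: no rule applies. -/
def Final {Sg : AbsSig F} (Th : AbsTh Sg) (C : Config F) : Prop :=
  ∀ C' : Config F, ¬ Step Th C C'

/-- `AUnif(C)`: the set of final configurations reachable from `C`. -/
def AUnifSet {Sg : AbsSig F} (Th : AbsTh Sg) (C : Config F) : Set (Config F) :=
  {C' | Relation.ReflTransGen (Step Th) C C' ∧ Final Th C'}

open Classical in
/-- The left substitution `σ_W` associated with a set of AUEs. -/
noncomputable def sigmaW (W : Set (AUE F)) : ℕ → Tm F :=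
  fun y => if h : ∃ a, a ∈ W ∧ a.lab = y then h.choose.lhs else .var y

open Classical in
/-- The right substitution `ρ_W` associated with a set of AUEs. -/
noncomputable def rhoW (W : Set (AUE F)) : ℕ → Tm F :=
  fun y => if h : ∃ a, a ∈ W ∧ a.lab = y then h.choose.rhs else .var y

/-- The abstraction set `↑(t, σ)`. -/
def absSet {Sg : AbsSig F} (Th : AbsTh Sg) (t : Tm F) (σ : ℕ → Tm F) : Set (Tm F) :=
  {r | AbsEq Th (r.subst σ) t ∧ NF Th r ∧ ∀ x : ℕ, VarIn x r → x ∈ Dom σ}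

/-- `Ψ(T, S)`: the set of abstraction substitutions of a configuration with
abstraction `T` and store `S`. -/
def Psi {Sg : AbsSig F} (Th : AbsTh Sg) (T S : Set (AUE F)) : Set (ℕ → Tm F) :=
  {τ | Dom τ = labels T ∧ ∀ a ∈ T,
      (a.lhs = starTm Sg → τ a.lab ∈ absSet Th a.rhs (rhoW S)) ∧
      (a.rhs = starTm Sg → τ a.lab ∈ absSet Th a.lhs (sigmaW S))}

/-- The initial configuration `⟨{s ≜_x t}; ∅; ∅; ι⟩` with starting label `xst`
and starting substitution `ι = {xst ↦ x}`. -/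
def initConfig (s t : Tm F) (x xst : ℕ) : Config F :=
  ⟨{⟨s, x, t⟩}, ∅, ∅, single xst (.var x)⟩

/-- `AUnif(C₀)` is merged: identical solved AUEs in (possibly different) final
stores carry the same label, and equal labels carry identical AUEs. -/
def Merged {Sg : AbsSig F} (Th : AbsTh Sg) (C0 : Config F) : Prop :=
  ∀ C1 ∈ AUnifSet Th C0, ∀ C2 ∈ AUnifSet Th C0, ∀ a ∈ C1.S, ∀ b ∈ C2.S,
    ((a.lhs = b.lhs ∧ a.rhs = b.rhs) ↔ a.lab = b.lab)

/-- `C_AUnif(s, t)`: all generalizations computed from final configurations of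
the initial configuration for `s ≜_x t`, instantiated by abstraction
substitutions. -/
def CAUnif {Sg : AbsSig F} (Th : AbsTh Sg) (s t : Tm F) (x xst : ℕ) : Set (Tm F) :=
  {g | ∃ C' ∈ AUnifSet Th (initConfig s t x xst),
      ∃ τ ∈ Psi Th C'.T C'.S, g = (C'.θ x).subst τ}

/-- Linear terms: no variable occurs more than once. -/
inductive Linear {F : Type} : Tm F → Prop where
  | var (x : ℕ) : Linear (.var x)
  | app (f : F) {ts : List (Tm F)} :
      (∀ t ∈ ts, Linear t) →
      List.Pairwise (fun s t => ∀ x : ℕ, VarIn x s → ¬ VarIn x t) ts →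
      Linear (.app f ts)


variable {F : Type}

theorem Tm.my_ind {P : Tm F → Prop} (hv : ∀ x, P (.var x))
    (ha : ∀ f ts, (∀ t ∈ ts, P t) → P (.app f ts)) : ∀ t, P t
  | .var x => hv x
  | .app f ts => ha f ts fun t ht => Tm.my_ind hv ha t
decreasing_by
  have := List.sizeOf_lt_of_mem ht
  simp only [Tm.app.sizeOf_spec]
  omega

@[simp] theorem subst_var (σ : ℕ → Tm F) (x : ℕ) : (Tm.var x).subst σ = σ x := by
  simp [Tm.subst]

theorem subst_app (σ : ℕ → Tm F) (f : F) (ts : List (Tm F)) :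
    (Tm.app f ts).subst σ = .app f (ts.map (Tm.subst σ)) := by
  rw [Tm.subst]
  congr 1
  exact List.attach_map_val (l := ts) (f := Tm.subst σ)

theorem subst_comp (σ τ : ℕ → Tm F) (t : Tm F) :
    (t.subst σ).subst τ = t.subst (fun v => (σ v).subst τ) := by
  induction t using Tm.my_ind with
  | hv x => simp
  | ha f ts ih =>
      rw [subst_app, subst_app, subst_app, List.map_map]
      congr 1
      exact List.map_congr_left fun t ht => ih t ht

theorem subst_congr {Sg : AbsSig F} (Th : AbsTh Sg) (σ τ : ℕ → Tm F) (t : Tm F)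
    (h : ∀ v, VarIn v t → AbsEq Th (σ v) (τ v)) :
    AbsEq Th (t.subst σ) (t.subst τ) := by
  induction t using Tm.my_ind with
  | hv x => simpa using h x (VarIn.var x)
  | ha f ts ih =>
      rw [subst_app, subst_app]
      apply AbsEq.congr
      rw [List.forall₂_map_left_iff, List.forall₂_map_right_iff]
      rw [List.forall₂_same]
      exact fun t ht => ih t ht fun v hv => h v (VarIn.app f ht hv)
def varList : Tm F → List ℕ
  | .var x => [x]
  | .app _ ts => ts.attach.flatMap fun t => varList t.1
decreasing_by
  have := List.sizeOf_lt_of_mem t.2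
  simp only [Tm.app.sizeOf_spec]
  omega

theorem varIn_iff {x : ℕ} {t : Tm F} : VarIn x t ↔ x ∈ varList t := by
  constructor
  · intro h
    induction h with
    | var => simp [varList]
    | app f hmem hin ih =>
        rw [varList]
        simp only [List.mem_flatMap, List.mem_attach, true_and, Subtype.exists]
        exact ⟨_, hmem, ih⟩
  · intro h
    induction t using Tm.my_ind with
    | hv y => simp [varList] at h; subst h; exact VarIn.var x
    | ha f ts ih =>
        rw [varList] at h
        simp only [List.mem_flatMap, List.mem_attach, true_and, Subtype.exists] at h
        obtain ⟨t, ht, hx⟩ := h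
        exact VarIn.app f ht (ih t ht hx)

theorem varIn_var {x z : ℕ} (h : VarIn x (Tm.var z : Tm F)) : x = z := by
  cases h; rfl

theorem varSet_finite (t : Tm F) : {x : ℕ | VarIn x t}.Finite := by
  apply Set.Finite.subset (varList t).finite_toSet
  intro x hx
  exact varIn_iff.mp hx

theorem rvar_finite {θ : ℕ → Tm F} (h : FinDom θ) : (Rvar θ).Finite := by
  have : Rvar θ ⊆ ⋃ z ∈ Dom θ, {y | VarIn y (θ z)} := by
    rintro y ⟨z, hz, hy⟩
    exact Set.mem_biUnion hz hy
  exact Set.Finite.subset (Set.Finite.biUnion h fun z _ => varSet_finite (θ z)) this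

theorem labels_union (X Y : Set (AUE F)) : labels (X ∪ Y) = labels X ∪ labels Y :=
  Set.image_union _ _ _

theorem labels_insert (a : AUE F) (X : Set (AUE F)) :
    labels (insert a X) = insert a.lab (labels X) := Set.image_insert_eq

theorem mem_labels {a : AUE F} {W : Set (AUE F)} (h : a ∈ W) : a.lab ∈ labels W :=
  ⟨a, h, rfl⟩

theorem labels_finite {W : Set (AUE F)} (h : W.Finite) : (labels W).Finite :=
  h.image _

theorem sigmaW_eval {W : Set (AUE F)} (hW : ValidAUEs W) {a : AUE F} (ha : a ∈ W) :
    sigmaW W a.lab = a.lhs ∧ rhoW W a.lab = a.rhs := by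
  have h : ∃ b, b ∈ W ∧ b.lab = a.lab := ⟨a, ha, rfl⟩
  have hb := h.choose_spec
  have : h.choose = a := hW _ hb.1 _ ha hb.2
  constructor
  · rw [sigmaW, dif_pos h, this]
  · rw [rhoW, dif_pos h, this]

theorem sigmaW_notin {W : Set (AUE F)} {v : ℕ} (h : ¬ ∃ b, b ∈ W ∧ b.lab = v) :
    sigmaW W v = .var v ∧ rhoW W v = .var v := by
  constructor
  · rw [sigmaW, dif_neg h]
  · rw [rhoW, dif_neg h]

theorem finDom_sigmaW {W : Set (AUE F)} (h : W.Finite) :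
    FinDom (sigmaW W) ∧ FinDom (rhoW W) := by
  have key : ∀ v, v ∉ labels W → sigmaW W v = .var v ∧ rhoW W v = .var v := by
    intro v hv
    apply sigmaW_notin
    rintro ⟨b, hb, rfl⟩
    exact hv (mem_labels hb)
  constructor
  · apply Set.Finite.subset (labels_finite h)
    intro v hv
    by_contra hc
    exact hv (key v hc).1
  · apply Set.Finite.subset (labels_finite h)
    intro v hv
    by_contra hc
    exact hv (key v hc).2
/-- Invariants preserved along derivations. -/
structure Inv (C : Config F) : Prop where
  finA : C.A.Finite
  finS : C.S.Finite
  finT : C.T.Finite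
  finD : FinDom C.θ
  valid : ValidAUEs (C.A ∪ C.S ∪ C.T)

theorem fresh_spec {C : Config F} (h : Inv C) (i : ℕ) : FreshIn C (nextFresh C + i) := by
  have hU : (labels C.A ∪ labels C.S ∪ labels C.T ∪ Dom C.θ ∪ Rvar C.θ).Finite := by
    have hA := labels_finite h.finA
    have hS := labels_finite h.finS
    have hT := labels_finite h.finT
    have hD := h.finD
    have hR := rvar_finite h.finD
    exact (((hA.union hS).union hT).union hD).union hR
  obtain ⟨N, hN⟩ := hU.bddAbove
  have hNmem : (N + 1) ∈ {k : ℕ | ∀ m : ℕ, k ≤ m → FreshIn C m} := by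
    intro m hm
    have hnotin : m ∉ labels C.A ∪ labels C.S ∪ labels C.T ∪ Dom C.θ ∪ Rvar C.θ := by
      intro hmem
      have := hN hmem
      omega
    refine ⟨?_, ?_, ?_, ?_, ?_⟩ <;> (intro hc; apply hnotin; simp [hc])
  have hns : nextFresh C ∈ {k : ℕ | ∀ m : ℕ, k ≤ m → FreshIn C m} :=
    Nat.sInf_mem ⟨N + 1, hNmem⟩
  exact hns _ (Nat.le_add_right _ i)

/-- The relevant variables of a configuration. -/
def lset (C : Config F) : Set ℕ := labels (C.A ∪ C.S ∪ C.T) ∪ Dom C.θ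

theorem sigma_agree {W W' : Set (AUE F)} (hW : ValidAUEs W) (hW' : ValidAUEs W')
    {x v : ℕ} (hvx : v ≠ x)
    (h1 : ∀ b ∈ W, b.lab ≠ x → b ∈ W')
    (h2 : ∀ b ∈ W', b ∉ W → v ≠ b.lab) :
    sigmaW W' v = sigmaW W v ∧ rhoW W' v = rhoW W v := by
  by_cases h : ∃ b, b ∈ W ∧ b.lab = v
  · obtain ⟨b, hb, rfl⟩ := h
    have hb' : b ∈ W' := h1 b hb (fun hc => hvx hc)
    have e1 := sigmaW_eval hW hb
    have e2 := sigmaW_eval hW' hb'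
    rw [e1.1, e1.2, e2.1, e2.2]
    exact ⟨rfl, rfl⟩
  · have h' : ¬ ∃ b, b ∈ W' ∧ b.lab = v := by
      rintro ⟨b, hb, rfl⟩
      by_cases hbW : b ∈ W
      · exact h ⟨b, hbW, rfl⟩
      · exact h2 b hb hbW rfl
    have e1 := sigmaW_notin h
    have e2 := sigmaW_notin h'
    rw [e1.1, e1.2, e2.1, e2.2]
    exact ⟨rfl, rfl⟩

theorem generic_eq {Sg : AbsSig F} (Th : AbsTh Sg) {θ : ℕ → Tm F} {x : ℕ} {t : Tm F}
    (μ μ' : ℕ → Tm F) (z : ℕ)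
    (hx : AbsEq Th (t.subst μ') (μ x))
    (hagree : ∀ v, VarIn v (θ z) → v ≠ x → AbsEq Th (μ' v) (μ v)) :
    AbsEq Th ((compOne θ x t z).subst μ') ((θ z).subst μ) := by
  have hc : compOne θ x t z = (θ z).subst (single x t) := rfl
  rw [hc, subst_comp]
  apply subst_congr
  intro v hv
  by_cases hvx : v = x
  · subst hvx
    simpa [single] using hx
  · simpa [single, hvx] using hagree v hv hvx
theorem not_dom {θ : ℕ → Tm F} {z : ℕ} (h : z ∉ Dom θ) : θ z = .var z := by
  by_contra hc; exact h hc

theorem generic_step {Sg : AbsSig F} (Th : AbsTh Sg)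
    {A S T A' S' T' : Set (AUE F)} {θ : ℕ → Tm F} {x : ℕ} {t : Tm F}
    (hWv : ValidAUEs (A ∪ S ∪ T)) (hW'v : ValidAUEs (A' ∪ S' ∪ T'))
    (h1 : ∀ b ∈ A ∪ S ∪ T, b.lab ≠ x → b ∈ A' ∪ S' ∪ T')
    (h2 : ∀ b ∈ A' ∪ S' ∪ T', b ∉ A ∪ S ∪ T → b.lab ∉ labels (A ∪ S ∪ T) ∪ Rvar θ)
    (ht : AbsEq Th (t.subst (sigmaW (A' ∪ S' ∪ T'))) (sigmaW (A ∪ S ∪ T) x))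
    (htr : AbsEq Th (t.subst (rhoW (A' ∪ S' ∪ T'))) (rhoW (A ∪ S ∪ T) x))
    (htne : ∀ w, t = .var w → w ≠ x ∧ w ∈ labels (A' ∪ S' ∪ T')) :
    ∀ z ∈ lset ⟨A, S, T, θ⟩, z ∈ lset ⟨A', S', T', compOne θ x t⟩ ∧
      AbsEq Th ((compOne θ x t z).subst (sigmaW (A' ∪ S' ∪ T'))) ((θ z).subst (sigmaW (A ∪ S ∪ T))) ∧
      AbsEq Th ((compOne θ x t z).subst (rhoW (A' ∪ S' ∪ T'))) ((θ z).subst (rhoW (A ∪ S ∪ T))) := by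
  intro z hz
  -- every variable of θ z is a label of C or in Rvar θ
  have hvars : ∀ v, VarIn v (θ z) → v ∈ labels (A ∪ S ∪ T) ∪ Rvar θ := by
    intro v hv
    by_cases hzD : z ∈ Dom θ
    · exact Or.inr ⟨z, hzD, hv⟩
    · have hθz := not_dom hzD
      rw [hθz] at hv
      have := varIn_var hv
      subst this
      rcases hz with hl | hd
      · exact Or.inl hl
      · exact absurd hd hzD
  have hagree : ∀ v, VarIn v (θ z) → v ≠ x →
      sigmaW (A' ∪ S' ∪ T') v = sigmaW (A ∪ S ∪ T) v ∧
      rhoW (A' ∪ S' ∪ T') v = rhoW (A ∪ S ∪ T) v := by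
    intro v hv hvx
    refine sigma_agree hWv hW'v hvx h1 ?_
    intro b hb hbW heq
    exact h2 b hb hbW (heq ▸ hvars v hv)
  refine ⟨?_, ?_, ?_⟩
  · -- lset preservation
    by_cases hzx : z = x
    · right
      show compOne θ x t z ≠ .var z
      intro hcon
      have hc : compOne θ x t z = (θ z).subst (single x t) := rfl
      rw [hc] at hcon
      cases hθ : θ z with
      | var w =>
          rw [hθ, subst_var, single] at hcon
          by_cases hwx : w = x
          · rw [if_pos hwx] at hcon
            exact (htne z hcon).1 hzx
          · rw [if_neg hwx] at hcon
            exact hwx ((Tm.var.inj hcon).trans hzx)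
      | app f ts =>
          rw [hθ, subst_app] at hcon
          exact nomatch hcon
    · by_cases hD : compOne θ x t z = .var z
      · -- then θ z = var x and t = var z, so z is a new label
        left
        have hc : compOne θ x t z = (θ z).subst (single x t) := rfl
        rw [hc] at hD
        cases hθ : θ z with
        | var w =>
            rw [hθ, subst_var, single] at hD
            by_cases hwx : w = x
            · rw [if_pos hwx] at hD
              exact (htne z hD).2
            · rw [if_neg hwx] at hD
              have hwz : w = z := Tm.var.inj hD
              rcases hz with hl | hd
              · -- z ∈ labels W, z ≠ x, so preserved
                obtain ⟨b, hb, rfl⟩ := hl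
                exact mem_labels (h1 b hb hzx)
              · exact absurd (show θ z = .var z by rw [hθ, hwz]) hd
        | app f ts =>
            rw [hθ, subst_app] at hD
            exact absurd hD (fun hcon => nomatch hcon)
      · right
        show compOne θ x t z ≠ .var z
        exact hD
  · exact generic_eq Th _ _ z ht fun v hv hvx => (hagree v hv hvx).1 ▸ AbsEq.refl _
  · exact generic_eq Th _ _ z htr fun v hv hvx => (hagree v hv hvx).2 ▸ AbsEq.refl _
theorem valid_extend {W' W N : Set (AUE F)} (hW : ValidAUEs W) (hN : ValidAUEs N)
    (hsub : ∀ b ∈ W', b ∈ W ∨ b ∈ N)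
    (hdisj : ∀ b ∈ N, b.lab ∉ labels W) :
    ValidAUEs W' := by
  intro b hb c hc he
  rcases hsub b hb with hbW | hbN <;> rcases hsub c hc with hcW | hcN
  · exact hW b hbW c hcW he
  · have hm := mem_labels hbW
    rw [he] at hm
    exact absurd hm (hdisj c hcN)
  · have hm := mem_labels hcW
    rw [← he] at hm
    exact absurd hm (hdisj b hbN)
  · exact hN b hbN c hcN he

theorem fresh_notin {A S T : Set (AUE F)} {θ : ℕ → Tm F} {m : ℕ}
    (h : FreshIn ⟨A, S, T, θ⟩ m) : m ∉ labels (A ∪ S ∪ T) ∪ Rvar θ := by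
  obtain ⟨h1, h2, h3, h4, h5⟩ := h
  simp only [labels_union, Set.mem_union]
  tauto

theorem mem_zip {ss ts : List (Tm F)} {ys : List ℕ} {i : ℕ}
    (h1 : i < ss.length) (h2 : i < ys.length) (h3 : i < ts.length) :
    (⟨ss[i], ys[i], ts[i]⟩ : AUE F) ∈ zipAUEs ss ys ts :=
  ⟨i, h1, h2, h3, rfl⟩

theorem zip_finite (ss ts : List (Tm F)) (ys : List ℕ) : (zipAUEs ss ys ts).Finite := by
  apply Set.Finite.subset ((Set.finite_Iio ss.length).image
    (fun i => (⟨ss.getD i (.var 0), ys.getD i 0, ts.getD i (.var 0)⟩ : AUE F)))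
  rintro a ⟨i, h1, h2, h3, rfl⟩
  refine ⟨i, h1, ?_⟩
  simp only [List.getD_eq_getElem _ _ h1, List.getD_eq_getElem _ _ h2,
    List.getD_eq_getElem _ _ h3, List.get_eq_getElem]

theorem dom_compOne {θ : ℕ → Tm F} {x : ℕ} {t : Tm F} :
    Dom (compOne θ x t) ⊆ insert x (Dom θ) := by
  intro z hz
  by_cases hzx : z = x
  · exact Or.inl hzx
  · right
    intro hD
    apply hz
    show (θ z).subst (single x t) = .var z
    rw [hD, subst_var, single, if_neg hzx]
theorem step_main {Sg : AbsSig F} {Th : AbsTh Sg} {C C' : Config F}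
    (h : Step Th C C') (hI : Inv C) :
    Inv C' ∧ ∀ z ∈ lset C, z ∈ lset C' ∧
      AbsEq Th ((C'.θ z).subst (sigmaW (C'.A ∪ C'.S ∪ C'.T)))
        ((C.θ z).subst (sigmaW (C.A ∪ C.S ∪ C.T))) ∧
      AbsEq Th ((C'.θ z).subst (rhoW (C'.A ∪ C'.S ∪ C'.T)))
        ((C.θ z).subst (rhoW (C.A ∪ C.S ∪ C.T))) := by
  cases h with
  | dec f ss ts x ys A S T θ hlen hnotin hys =>
    subst hys
    set N := nextFresh (⟨insert ⟨.app f ss, x, .app f ts⟩ A, S, T, θ⟩ : Config F) with hN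
    set L := (List.range ss.length).map (fun i => N + i) with hLdef
    set a0 : AUE F := ⟨.app f ss, x, .app f ts⟩ with ha0
    set W := insert a0 A ∪ S ∪ T with hW
    set W' := (zipAUEs ss L ts ∪ A) ∪ S ∪ T with hW'
    have hWv : ValidAUEs W := hI.valid
    have hL_len : L.length = ss.length := by simp [hLdef]
    have hL_get : ∀ i (hi : i < L.length), L[i] = N + i := by
      intro i hi
      simp [hLdef]
    have hfresh : ∀ i, FreshIn (⟨insert a0 A, S, T, θ⟩ : Config F) (N + i) :=
      fun i => fresh_spec hI i
    have hzlab : ∀ b ∈ zipAUEs ss L ts, ∃ i, i < ss.length ∧ b.lab = N + i := by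
      rintro b ⟨i, h1, h2, h3, rfl⟩
      refine ⟨i, h1, ?_⟩
      show L.get ⟨i, h2⟩ = N + i
      rw [List.get_eq_getElem]
      exact hL_get i h2
    have hZvalid : ValidAUEs (zipAUEs ss L ts) := by
      rintro b ⟨i, hi1, hi2, hi3, rfl⟩ c ⟨j, hj1, hj2, hj3, rfl⟩ he
      have he' : L.get ⟨i, hi2⟩ = L.get ⟨j, hj2⟩ := he
      rw [List.get_eq_getElem, List.get_eq_getElem, hL_get i hi2, hL_get j hj2] at he'
      have : i = j := by omega
      subst this
      rfl
    have hZfresh : ∀ b ∈ zipAUEs ss L ts, b.lab ∉ labels W ∪ Rvar θ := by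
      intro b hb
      obtain ⟨i, _, hbl⟩ := hzlab b hb
      rw [hbl]
      exact fresh_notin (hfresh i)
    have hW'v : ValidAUEs W' := by
      refine valid_extend hWv hZvalid ?_ ?_
      · intro b hb
        simp only [hW', hW, Set.mem_union, Set.mem_insert_iff] at hb ⊢
        tauto
      · intro b hb hc
        exact hZfresh b hb (Or.inl hc)
    have ha0W : a0 ∈ W := Or.inl (Or.inl (Set.mem_insert _ _))
    have h1 : ∀ b ∈ W, b.lab ≠ x → b ∈ W' := by
      rintro b ((hb | hb) | hb) hbx
      · rcases Set.mem_insert_iff.mp hb with rfl | hb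
        · exact absurd rfl hbx
        · exact Or.inl (Or.inl (Or.inr hb))
      · exact Or.inl (Or.inr hb)
      · exact Or.inr hb
    have h2 : ∀ b ∈ W', b ∉ W → b.lab ∉ labels W ∪ Rvar θ := by
      rintro b (((hb | hb) | hb) | hb) hbW
      · exact hZfresh b hb
      · exact absurd (Or.inl (Or.inl (Set.mem_insert_iff.mpr (Or.inr hb)))) hbW
      · exact absurd (Or.inl (Or.inr hb)) hbW
      · exact absurd (Or.inr hb) hbW
    have hmemW' : ∀ i (h1 : i < ss.length) (h2 : i < L.length) (h3 : i < ts.length),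
        (⟨ss[i], L[i], ts[i]⟩ : AUE F) ∈ W' :=
      fun i h1 h2 h3 => Or.inl (Or.inl (Or.inl (mem_zip h1 h2 h3)))
    have htt : (Tm.app f (L.map Tm.var)).subst (sigmaW W') = .app f ss := by
      rw [subst_app, List.map_map]
      congr 1
      apply List.ext_getElem (by simp [hL_len])
      intro i hi1 hi2
      have hiL : i < L.length := by simpa using hi1
      have hits : i < ts.length := by omega
      simp only [List.getElem_map, Function.comp_apply, subst_var]
      exact (sigmaW_eval hW'v (hmemW' i hi2 hiL hits)).1
    have htt' : (Tm.app f (L.map Tm.var)).subst (rhoW W') = .app f ts := by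
      rw [subst_app, List.map_map]
      congr 1
      apply List.ext_getElem (by simp [hL_len, hlen])
      intro i hi1 hi2
      have hiL : i < L.length := by simpa using hi1
      have hiss : i < ss.length := by omega
      simp only [List.getElem_map, Function.comp_apply, subst_var]
      exact (sigmaW_eval hW'v (hmemW' i hiss hiL hi2)).2
    have ht : AbsEq Th ((Tm.app f (L.map Tm.var)).subst (sigmaW W')) (sigmaW W x) := by
      have hx : sigmaW W x = .app f ss := (sigmaW_eval hWv ha0W).1
      rw [htt, hx]
      exact AbsEq.refl _
    have htr : AbsEq Th ((Tm.app f (L.map Tm.var)).subst (rhoW W')) (rhoW W x) := by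
      have hx : rhoW W x = .app f ts := (sigmaW_eval hWv ha0W).2
      rw [htt', hx]
      exact AbsEq.refl _
    have htne : ∀ w, (Tm.app f (L.map Tm.var) : Tm F) = .var w → w ≠ x ∧ w ∈ labels W' :=
      fun w hw => nomatch hw
    refine ⟨⟨(zip_finite ss ts L).union (hI.finA.subset (Set.subset_insert _ _)),
      hI.finS, hI.finT, ((hI.finD.insert x).subset dom_compOne), hW'v⟩, ?_⟩
    exact generic_step Th hWv hW'v h1 h2 ht htr htne
  | sol a A S T θ hhead hrel hnotin =>
    have hU : insert a A ∪ S ∪ T = A ∪ insert a S ∪ T := by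
      ext b
      simp only [Set.mem_union, Set.mem_insert_iff]
      tauto
    refine ⟨⟨hI.finA.subset (Set.subset_insert _ _), hI.finS.insert a, hI.finT,
      hI.finD, hU ▸ hI.valid⟩, ?_⟩
    intro z hz
    have hls : lset (⟨A, insert a S, T, θ⟩ : Config F) = lset (⟨insert a A, S, T, θ⟩ : Config F) := by
      show labels (A ∪ insert a S ∪ T) ∪ Dom θ = labels (insert a A ∪ S ∪ T) ∪ Dom θ
      rw [hU]
    refine ⟨hls ▸ hz, ?_, ?_⟩
    · show AbsEq Th ((θ z).subst (sigmaW (A ∪ insert a S ∪ T))) ((θ z).subst (sigmaW (insert a A ∪ S ∪ T)))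
      rw [hU]
      exact AbsEq.refl _
    · show AbsEq Th ((θ z).subst (rhoW (A ∪ insert a S ∪ T))) ((θ z).subst (rhoW (insert a A ∪ S ∪ T)))
      rw [hU]
      exact AbsEq.refl _
  | mer s t x y S T θ hxy hx hy =>
    set a0 : AUE F := ⟨s, x, t⟩ with ha0
    set b0 : AUE F := ⟨s, y, t⟩ with hb0
    set W := (∅ : Set (AUE F)) ∪ insert a0 (insert b0 S) ∪ T with hW
    set W' := (∅ : Set (AUE F)) ∪ insert b0 S ∪ T with hW'
    have hWv : ValidAUEs W := hI.valid
    have hsub : ∀ b ∈ W', b ∈ W := by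
      intro b hb
      simp only [hW', hW, Set.mem_union, Set.mem_insert_iff] at hb ⊢
      tauto
    have hW'v : ValidAUEs W' := fun b hb c hc he => hWv b (hsub b hb) c (hsub c hc) he
    have ha0W : a0 ∈ W := Or.inl (Or.inr (Set.mem_insert _ _))
    have hb0W' : b0 ∈ W' := Or.inl (Or.inr (Set.mem_insert _ _))
    have h1 : ∀ b ∈ W, b.lab ≠ x → b ∈ W' := by
      rintro b ((hb | hb) | hb) hbx
      · exact absurd hb (Set.notMem_empty b)
      · rcases Set.mem_insert_iff.mp hb with rfl | hb
        · exact absurd rfl hbx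
        · exact Or.inl (Or.inr hb)
      · exact Or.inr hb
    have h2 : ∀ b ∈ W', b ∉ W → b.lab ∉ labels W ∪ Rvar θ :=
      fun b hb hbW => absurd (hsub b hb) hbW
    have ht : AbsEq Th ((Tm.var y).subst (sigmaW W')) (sigmaW W x) := by
      have e1 : sigmaW W' y = s := (sigmaW_eval hW'v hb0W').1
      have e2 : sigmaW W x = s := (sigmaW_eval hWv ha0W).1
      rw [subst_var, e1, e2]
      exact AbsEq.refl _
    have htr : AbsEq Th ((Tm.var y).subst (rhoW W')) (rhoW W x) := by
      have e1 : rhoW W' y = t := (sigmaW_eval hW'v hb0W').2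
      have e2 : rhoW W x = t := (sigmaW_eval hWv ha0W).2
      rw [subst_var, e1, e2]
      exact AbsEq.refl _
    have htne : ∀ w, (Tm.var y : Tm F) = .var w → w ≠ x ∧ w ∈ labels W' := by
      intro w hw
      have : y = w := Tm.var.inj hw
      subst this
      exact ⟨fun hc => hxy hc.symm, mem_labels hb0W'⟩
    refine ⟨⟨hI.finA, hI.finS.subset (Set.subset_insert _ _), hI.finT,
      ((hI.finD.insert x).subset dom_compOne), hW'v⟩, ?_⟩
    exact generic_step Th hWv hW'v h1 h2 ht htr htne
  | expLA1 f e t1 t2 x y1 y2 A S T θ hp hnotin hy1 hy2 =>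
    set a0 : AUE F := ⟨.app e [], x, .app f [t1, t2]⟩ with ha0
    set n1 : AUE F := ⟨.app e [], y1, t1⟩ with hn1
    set n2 : AUE F := ⟨starTm Sg, y2, t2⟩ with hn2
    set W := insert a0 A ∪ S ∪ T with hWd
    set W' := insert n1 A ∪ S ∪ insert n2 T with hW'd
    have hWv : ValidAUEs W := hI.valid
    have hf1 : FreshIn (⟨insert a0 A, S, T, θ⟩ : Config F) y1 := by
      rw [hy1]; simpa using fresh_spec hI 0
    have hf2 : FreshIn (⟨insert a0 A, S, T, θ⟩ : Config F) y2 := by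
      rw [hy2, hy1]; exact fresh_spec hI 1
    have hy12 : y1 ≠ y2 := by omega
    have hZfresh : ∀ b ∈ ({n1, n2} : Set (AUE F)), b.lab ∉ labels W ∪ Rvar θ := by
      rintro b (rfl | rfl)
      · exact fresh_notin hf1
      · exact fresh_notin hf2
    have hZvalid : ValidAUEs ({n1, n2} : Set (AUE F)) := by
      rintro b (rfl | rfl) c (rfl | rfl) he
      · rfl
      · exact absurd he hy12
      · exact absurd he.symm hy12
      · rfl
    have hW'v : ValidAUEs W' := by
      refine valid_extend hWv hZvalid ?_ ?_
      · intro b hb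
        simp only [hW'd, hWd, Set.mem_union, Set.mem_insert_iff, Set.mem_singleton_iff] at hb ⊢
        tauto
      · exact fun b hb hc => hZfresh b hb (Or.inl hc)
    have ha0W : a0 ∈ W := Or.inl (Or.inl (Set.mem_insert _ _))
    have hn1W' : n1 ∈ W' := Or.inl (Or.inl (Set.mem_insert _ _))
    have hn2W' : n2 ∈ W' := Or.inr (Set.mem_insert _ _)
    have h1 : ∀ b ∈ W, b.lab ≠ x → b ∈ W' := by
      rintro b ((hb | hb) | hb) hbx
      · rcases Set.mem_insert_iff.mp hb with rfl | hb
        · exact absurd rfl hbx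
        · exact Or.inl (Or.inl (Set.mem_insert_iff.mpr (Or.inr hb)))
      · exact Or.inl (Or.inr hb)
      · exact Or.inr (Set.mem_insert_iff.mpr (Or.inr hb))
    have h2 : ∀ b ∈ W', b ∉ W → b.lab ∉ labels W ∪ Rvar θ := by
      rintro b ((hb | hb) | hb) hbW
      · rcases Set.mem_insert_iff.mp hb with rfl | hb
        · exact hZfresh n1 (Or.inl rfl)
        · exact absurd (Or.inl (Or.inl (Set.mem_insert_iff.mpr (Or.inr hb)))) hbW
      · exact absurd (Or.inl (Or.inr hb)) hbW
      · rcases Set.mem_insert_iff.mp hb with rfl | hb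
        · exact hZfresh n2 (Or.inr rfl)
        · exact absurd (Or.inr hb) hbW
    have ht : AbsEq Th ((Tm.app f [.var y1, .var y2]).subst (sigmaW W')) (sigmaW W x) := by
      have e0 : sigmaW W x = .app e [] := (sigmaW_eval hWv ha0W).1
      have e1 : sigmaW W' y1 = .app e [] := (sigmaW_eval hW'v hn1W').1
      have e2 : sigmaW W' y2 = starTm Sg := (sigmaW_eval hW'v hn2W').1
      rw [subst_app]
      simp only [List.map_cons, List.map_nil, subst_var]
      rw [e0, e1, e2]
      exact AbsEq.absL _ hp
    have htr : AbsEq Th ((Tm.app f [.var y1, .var y2]).subst (rhoW W')) (rhoW W x) := by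
      have e0 : rhoW W x = .app f [t1, t2] := (sigmaW_eval hWv ha0W).2
      have e1 : rhoW W' y1 = t1 := (sigmaW_eval hW'v hn1W').2
      have e2 : rhoW W' y2 = t2 := (sigmaW_eval hW'v hn2W').2
      rw [subst_app]
      simp only [List.map_cons, List.map_nil, subst_var]
      rw [e0, e1, e2]
      exact AbsEq.refl _
    have htne : ∀ w, (Tm.app f [.var y1, .var y2] : Tm F) = .var w → w ≠ x ∧ w ∈ labels W' :=
      fun w hw => nomatch hw
    refine ⟨⟨(hI.finA.subset (Set.subset_insert _ _)).insert n1, hI.finS,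
      hI.finT.insert n2, ((hI.finD.insert x).subset dom_compOne), hW'v⟩, ?_⟩
    exact generic_step Th hWv hW'v h1 h2 ht htr htne
  | expLA2 f e t1 t2 x y1 y2 A S T θ hp hnotin hy1 hy2 =>
    set a0 : AUE F := ⟨.app e [], x, .app f [t1, t2]⟩ with ha0
    set n1 : AUE F := ⟨.app e [], y2, t2⟩ with hn1
    set n2 : AUE F := ⟨starTm Sg, y1, t1⟩ with hn2
    set W := insert a0 A ∪ S ∪ T with hWd
    set W' := insert n1 A ∪ S ∪ insert n2 T with hW'd
    have hWv : ValidAUEs W := hI.valid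
    have hf1 : FreshIn (⟨insert a0 A, S, T, θ⟩ : Config F) y1 := by
      rw [hy1]; simpa using fresh_spec hI 0
    have hf2 : FreshIn (⟨insert a0 A, S, T, θ⟩ : Config F) y2 := by
      rw [hy2, hy1]; exact fresh_spec hI 1
    have hy12 : y1 ≠ y2 := by omega
    have hZfresh : ∀ b ∈ ({n1, n2} : Set (AUE F)), b.lab ∉ labels W ∪ Rvar θ := by
      rintro b (rfl | rfl)
      · exact fresh_notin hf2
      · exact fresh_notin hf1
    have hZvalid : ValidAUEs ({n1, n2} : Set (AUE F)) := by
      rintro b (rfl | rfl) c (rfl | rfl) he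
      · rfl
      · exact absurd he.symm hy12
      · exact absurd he hy12
      · rfl
    have hW'v : ValidAUEs W' := by
      refine valid_extend hWv hZvalid ?_ ?_
      · intro b hb
        simp only [hW'd, hWd, Set.mem_union, Set.mem_insert_iff, Set.mem_singleton_iff] at hb ⊢
        tauto
      · exact fun b hb hc => hZfresh b hb (Or.inl hc)
    have ha0W : a0 ∈ W := Or.inl (Or.inl (Set.mem_insert _ _))
    have hn1W' : n1 ∈ W' := Or.inl (Or.inl (Set.mem_insert _ _))
    have hn2W' : n2 ∈ W' := Or.inr (Set.mem_insert _ _)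
    have h1 : ∀ b ∈ W, b.lab ≠ x → b ∈ W' := by
      rintro b ((hb | hb) | hb) hbx
      · rcases Set.mem_insert_iff.mp hb with rfl | hb
        · exact absurd rfl hbx
        · exact Or.inl (Or.inl (Set.mem_insert_iff.mpr (Or.inr hb)))
      · exact Or.inl (Or.inr hb)
      · exact Or.inr (Set.mem_insert_iff.mpr (Or.inr hb))
    have h2 : ∀ b ∈ W', b ∉ W → b.lab ∉ labels W ∪ Rvar θ := by
      rintro b ((hb | hb) | hb) hbW
      · rcases Set.mem_insert_iff.mp hb with rfl | hb
        · exact hZfresh n1 (Or.inl rfl)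
        · exact absurd (Or.inl (Or.inl (Set.mem_insert_iff.mpr (Or.inr hb)))) hbW
      · exact absurd (Or.inl (Or.inr hb)) hbW
      · rcases Set.mem_insert_iff.mp hb with rfl | hb
        · exact hZfresh n2 (Or.inr rfl)
        · exact absurd (Or.inr hb) hbW
    have ht : AbsEq Th ((Tm.app f [.var y1, .var y2]).subst (sigmaW W')) (sigmaW W x) := by
      have e0 : sigmaW W x = .app e [] := (sigmaW_eval hWv ha0W).1
      have e1 : sigmaW W' y1 = starTm Sg := (sigmaW_eval hW'v hn2W').1
      have e2 : sigmaW W' y2 = .app e [] := (sigmaW_eval hW'v hn1W').1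
      rw [subst_app]
      simp only [List.map_cons, List.map_nil, subst_var]
      rw [e0, e1, e2]
      exact AbsEq.absR _ hp
    have htr : AbsEq Th ((Tm.app f [.var y1, .var y2]).subst (rhoW W')) (rhoW W x) := by
      have e0 : rhoW W x = .app f [t1, t2] := (sigmaW_eval hWv ha0W).2
      have e1 : rhoW W' y1 = t1 := (sigmaW_eval hW'v hn2W').2
      have e2 : rhoW W' y2 = t2 := (sigmaW_eval hW'v hn1W').2
      rw [subst_app]
      simp only [List.map_cons, List.map_nil, subst_var]
      rw [e0, e1, e2]
      exact AbsEq.refl _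
    have htne : ∀ w, (Tm.app f [.var y1, .var y2] : Tm F) = .var w → w ≠ x ∧ w ∈ labels W' :=
      fun w hw => nomatch hw
    refine ⟨⟨(hI.finA.subset (Set.subset_insert _ _)).insert n1, hI.finS,
      hI.finT.insert n2, ((hI.finD.insert x).subset dom_compOne), hW'v⟩, ?_⟩
    exact generic_step Th hWv hW'v h1 h2 ht htr htne
  | expRA1 f e s1 s2 x y1 y2 A S T θ hp hnotin hy1 hy2 =>
    set a0 : AUE F := ⟨.app f [s1, s2], x, .app e []⟩ with ha0
    set n1 : AUE F := ⟨s1, y1, .app e []⟩ with hn1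
    set n2 : AUE F := ⟨s2, y2, starTm Sg⟩ with hn2
    set W := insert a0 A ∪ S ∪ T with hWd
    set W' := insert n1 A ∪ S ∪ insert n2 T with hW'd
    have hWv : ValidAUEs W := hI.valid
    have hf1 : FreshIn (⟨insert a0 A, S, T, θ⟩ : Config F) y1 := by
      rw [hy1]; simpa using fresh_spec hI 0
    have hf2 : FreshIn (⟨insert a0 A, S, T, θ⟩ : Config F) y2 := by
      rw [hy2, hy1]; exact fresh_spec hI 1
    have hy12 : y1 ≠ y2 := by omega
    have hZfresh : ∀ b ∈ ({n1, n2} : Set (AUE F)), b.lab ∉ labels W ∪ Rvar θ := by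
      rintro b (rfl | rfl)
      · exact fresh_notin hf1
      · exact fresh_notin hf2
    have hZvalid : ValidAUEs ({n1, n2} : Set (AUE F)) := by
      rintro b (rfl | rfl) c (rfl | rfl) he
      · rfl
      · exact absurd he hy12
      · exact absurd he.symm hy12
      · rfl
    have hW'v : ValidAUEs W' := by
      refine valid_extend hWv hZvalid ?_ ?_
      · intro b hb
        simp only [hW'd, hWd, Set.mem_union, Set.mem_insert_iff, Set.mem_singleton_iff] at hb ⊢
        tauto
      · exact fun b hb hc => hZfresh b hb (Or.inl hc)
    have ha0W : a0 ∈ W := Or.inl (Or.inl (Set.mem_insert _ _))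
    have hn1W' : n1 ∈ W' := Or.inl (Or.inl (Set.mem_insert _ _))
    have hn2W' : n2 ∈ W' := Or.inr (Set.mem_insert _ _)
    have h1 : ∀ b ∈ W, b.lab ≠ x → b ∈ W' := by
      rintro b ((hb | hb) | hb) hbx
      · rcases Set.mem_insert_iff.mp hb with rfl | hb
        · exact absurd rfl hbx
        · exact Or.inl (Or.inl (Set.mem_insert_iff.mpr (Or.inr hb)))
      · exact Or.inl (Or.inr hb)
      · exact Or.inr (Set.mem_insert_iff.mpr (Or.inr hb))
    have h2 : ∀ b ∈ W', b ∉ W → b.lab ∉ labels W ∪ Rvar θ := by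
      rintro b ((hb | hb) | hb) hbW
      · rcases Set.mem_insert_iff.mp hb with rfl | hb
        · exact hZfresh n1 (Or.inl rfl)
        · exact absurd (Or.inl (Or.inl (Set.mem_insert_iff.mpr (Or.inr hb)))) hbW
      · exact absurd (Or.inl (Or.inr hb)) hbW
      · rcases Set.mem_insert_iff.mp hb with rfl | hb
        · exact hZfresh n2 (Or.inr rfl)
        · exact absurd (Or.inr hb) hbW
    have ht : AbsEq Th ((Tm.app f [.var y1, .var y2]).subst (sigmaW W')) (sigmaW W x) := by
      have e0 : sigmaW W x = .app f [s1, s2] := (sigmaW_eval hWv ha0W).1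
      have e1 : sigmaW W' y1 = s1 := (sigmaW_eval hW'v hn1W').1
      have e2 : sigmaW W' y2 = s2 := (sigmaW_eval hW'v hn2W').1
      rw [subst_app]
      simp only [List.map_cons, List.map_nil, subst_var]
      rw [e0, e1, e2]
      exact AbsEq.refl _
    have htr : AbsEq Th ((Tm.app f [.var y1, .var y2]).subst (rhoW W')) (rhoW W x) := by
      have e0 : rhoW W x = .app e [] := (sigmaW_eval hWv ha0W).2
      have e1 : rhoW W' y1 = .app e [] := (sigmaW_eval hW'v hn1W').2
      have e2 : rhoW W' y2 = starTm Sg := (sigmaW_eval hW'v hn2W').2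
      rw [subst_app]
      simp only [List.map_cons, List.map_nil, subst_var]
      rw [e0, e1, e2]
      exact AbsEq.absL _ hp
    have htne : ∀ w, (Tm.app f [.var y1, .var y2] : Tm F) = .var w → w ≠ x ∧ w ∈ labels W' :=
      fun w hw => nomatch hw
    refine ⟨⟨(hI.finA.subset (Set.subset_insert _ _)).insert n1, hI.finS,
      hI.finT.insert n2, ((hI.finD.insert x).subset dom_compOne), hW'v⟩, ?_⟩
    exact generic_step Th hWv hW'v h1 h2 ht htr htne
  | expRA2 f e s1 s2 x y1 y2 A S T θ hp hnotin hy1 hy2 =>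
    set a0 : AUE F := ⟨.app f [s1, s2], x, .app e []⟩ with ha0
    set n1 : AUE F := ⟨s2, y2, .app e []⟩ with hn1
    set n2 : AUE F := ⟨s1, y1, starTm Sg⟩ with hn2
    set W := insert a0 A ∪ S ∪ T with hWd
    set W' := insert n1 A ∪ S ∪ insert n2 T with hW'd
    have hWv : ValidAUEs W := hI.valid
    have hf1 : FreshIn (⟨insert a0 A, S, T, θ⟩ : Config F) y1 := by
      rw [hy1]; simpa using fresh_spec hI 0
    have hf2 : FreshIn (⟨insert a0 A, S, T, θ⟩ : Config F) y2 := by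
      rw [hy2, hy1]; exact fresh_spec hI 1
    have hy12 : y1 ≠ y2 := by omega
    have hZfresh : ∀ b ∈ ({n1, n2} : Set (AUE F)), b.lab ∉ labels W ∪ Rvar θ := by
      rintro b (rfl | rfl)
      · exact fresh_notin hf2
      · exact fresh_notin hf1
    have hZvalid : ValidAUEs ({n1, n2} : Set (AUE F)) := by
      rintro b (rfl | rfl) c (rfl | rfl) he
      · rfl
      · exact absurd he.symm hy12
      · exact absurd he hy12
      · rfl
    have hW'v : ValidAUEs W' := by
      refine valid_extend hWv hZvalid ?_ ?_
      · intro b hb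
        simp only [hW'd, hWd, Set.mem_union, Set.mem_insert_iff, Set.mem_singleton_iff] at hb ⊢
        tauto
      · exact fun b hb hc => hZfresh b hb (Or.inl hc)
    have ha0W : a0 ∈ W := Or.inl (Or.inl (Set.mem_insert _ _))
    have hn1W' : n1 ∈ W' := Or.inl (Or.inl (Set.mem_insert _ _))
    have hn2W' : n2 ∈ W' := Or.inr (Set.mem_insert _ _)
    have h1 : ∀ b ∈ W, b.lab ≠ x → b ∈ W' := by
      rintro b ((hb | hb) | hb) hbx
      · rcases Set.mem_insert_iff.mp hb with rfl | hb
        · exact absurd rfl hbx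
        · exact Or.inl (Or.inl (Set.mem_insert_iff.mpr (Or.inr hb)))
      · exact Or.inl (Or.inr hb)
      · exact Or.inr (Set.mem_insert_iff.mpr (Or.inr hb))
    have h2 : ∀ b ∈ W', b ∉ W → b.lab ∉ labels W ∪ Rvar θ := by
      rintro b ((hb | hb) | hb) hbW
      · rcases Set.mem_insert_iff.mp hb with rfl | hb
        · exact hZfresh n1 (Or.inl rfl)
        · exact absurd (Or.inl (Or.inl (Set.mem_insert_iff.mpr (Or.inr hb)))) hbW
      · exact absurd (Or.inl (Or.inr hb)) hbW
      · rcases Set.mem_insert_iff.mp hb with rfl | hb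
        · exact hZfresh n2 (Or.inr rfl)
        · exact absurd (Or.inr hb) hbW
    have ht : AbsEq Th ((Tm.app f [.var y1, .var y2]).subst (sigmaW W')) (sigmaW W x) := by
      have e0 : sigmaW W x = .app f [s1, s2] := (sigmaW_eval hWv ha0W).1
      have e1 : sigmaW W' y1 = s1 := (sigmaW_eval hW'v hn2W').1
      have e2 : sigmaW W' y2 = s2 := (sigmaW_eval hW'v hn1W').1
      rw [subst_app]
      simp only [List.map_cons, List.map_nil, subst_var]
      rw [e0, e1, e2]
      exact AbsEq.refl _
    have htr : AbsEq Th ((Tm.app f [.var y1, .var y2]).subst (rhoW W')) (rhoW W x) := by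
      have e0 : rhoW W x = .app e [] := (sigmaW_eval hWv ha0W).2
      have e1 : rhoW W' y1 = starTm Sg := (sigmaW_eval hW'v hn2W').2
      have e2 : rhoW W' y2 = .app e [] := (sigmaW_eval hW'v hn1W').2
      rw [subst_app]
      simp only [List.map_cons, List.map_nil, subst_var]
      rw [e0, e1, e2]
      exact AbsEq.absR _ hp
    have htne : ∀ w, (Tm.app f [.var y1, .var y2] : Tm F) = .var w → w ≠ x ∧ w ∈ labels W' :=
      fun w hw => nomatch hw
    refine ⟨⟨(hI.finA.subset (Set.subset_insert _ _)).insert n1, hI.finS,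
      hI.finT.insert n2, ((hI.finD.insert x).subset dom_compOne), hW'v⟩, ?_⟩
    exact generic_step Th hWv hW'v h1 h2 ht htr htne
theorem key {Sg : AbsSig F} {Th : AbsTh Sg} {Cn : Config F} {C : Config F}
    (hder : Relation.ReflTransGen (Step Th) C Cn) :
    Inv C → Inv Cn ∧ ∀ z ∈ lset C,
      AbsEq Th ((Cn.θ z).subst (sigmaW (Cn.A ∪ Cn.S ∪ Cn.T)))
        ((C.θ z).subst (sigmaW (C.A ∪ C.S ∪ C.T))) ∧
      AbsEq Th ((Cn.θ z).subst (rhoW (Cn.A ∪ Cn.S ∪ Cn.T)))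
        ((C.θ z).subst (rhoW (C.A ∪ C.S ∪ C.T))) := by
  induction hder using Relation.ReflTransGen.head_induction_on with
  | refl => exact fun h => ⟨h, fun z _ => ⟨AbsEq.refl _, AbsEq.refl _⟩⟩
  | head hstep _ ih =>
      intro hC
      obtain ⟨hC'', hpres⟩ := step_main hstep hC
      obtain ⟨hInvn, hQ⟩ := ih hC''
      refine ⟨hInvn, fun z hz => ?_⟩
      obtain ⟨hz', he1, he2⟩ := hpres z hz
      obtain ⟨g1, g2⟩ := hQ z hz'
      exact ⟨g1.trans he1, g2.trans he2⟩
/-- Soundness, Theorem 2: if `⟨A₀;S₀;T₀;θ₀⟩ ⟹* ⟨∅;Sₙ;Tₙ;θₙ⟩`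
is a derivation to a final configuration, then for every AUE `s ≜_x t` in
`A₀ ∪ S₀ ∪ Tₙ₀`, the term `xθₙ` is an `Abs`-generalization of `s` and `t`;
more precisely `xθₙσ_D ≈_Abs s` and `xθₙρ_D ≈_Abs t`, where
`σ_D = σ_{Sₙ ∪ Tₙ}` and `ρ_D = ρ_{Sₙ ∪ Tₙ}`. -/
theorem aunif_soundness {F : Type} {Sg : AbsSig F} (Th : AbsTh Sg)
    (C0 Cn : Config F) (h0 : IsConfig Th C0)
    (hder : Relation.ReflTransGen (Step Th) C0 Cn)
    (hAn : Cn.A = ∅) (hfin : Final Th Cn)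
    (a : AUE F) (ha : a ∈ C0.A ∪ C0.S ∪ C0.T) :
    Gen Th (Cn.θ a.lab) a.lhs a.rhs ∧
    AbsEq Th ((Cn.θ a.lab).subst (sigmaW (Cn.S ∪ Cn.T))) a.lhs ∧
    AbsEq Th ((Cn.θ a.lab).subst (rhoW (Cn.S ∪ Cn.T))) a.rhs := by
  have hvalid0 : ValidAUEs (C0.A ∪ C0.S ∪ C0.T) := by
    rintro b ((hb | hb) | hb) c ((hc | hc) | hc) he
    · exact h0.validA b hb c hc he
    · exact absurd (he ▸ mem_labels hb) (Set.disjoint_left.mp h0.disjAS · (mem_labels hc))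
    · exact absurd (he ▸ mem_labels hb) (Set.disjoint_left.mp h0.disjAT · (mem_labels hc))
    · exact absurd (he.symm ▸ mem_labels hc) (Set.disjoint_left.mp h0.disjAS · (mem_labels hb))
    · exact h0.validS b hb c hc he
    · exact absurd (he ▸ mem_labels hb) (Set.disjoint_left.mp h0.disjST · (mem_labels hc))
    · exact absurd (he.symm ▸ mem_labels hc) (Set.disjoint_left.mp h0.disjAT · (mem_labels hb))
    · exact absurd (he.symm ▸ mem_labels hc) (Set.disjoint_left.mp h0.disjST · (mem_labels hb))
    · exact h0.validT b hb c hc he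
  have hInv0 : Inv C0 := ⟨h0.finA, h0.finS, h0.finT, h0.finDom, hvalid0⟩
  obtain ⟨hInvn, hQ⟩ := key hder hInv0
  have hlab : a.lab ∈ lset C0 := Or.inl (mem_labels ha)
  obtain ⟨g1, g2⟩ := hQ a.lab hlab
  have hθ0 : C0.θ a.lab = .var a.lab := by
    apply not_dom
    rcases ha with (hb | hb) | hb
    · exact Set.disjoint_left.mp h0.disjAD (mem_labels hb)
    · exact Set.disjoint_left.mp h0.disjSD (mem_labels hb)
    · exact Set.disjoint_left.mp h0.disjTD (mem_labels hb)
  have hsets : Cn.A ∪ Cn.S ∪ Cn.T = Cn.S ∪ Cn.T := by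
    rw [hAn, Set.empty_union]
  have hσ0 := sigmaW_eval hvalid0 ha
  rw [hθ0, subst_var, hσ0.1, hsets] at g1
  rw [hθ0, subst_var, hσ0.2, hsets] at g2
  have hfd := finDom_sigmaW (hInvn.finS.union hInvn.finT)
  exact ⟨⟨⟨_, hfd.1, g1⟩, ⟨_, hfd.2, g2⟩⟩, g1, g2⟩

end AbsAU
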